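/- Let q ∈ ℂ with |q| < 1, let D ⊂ ℂ be the open unit disk, let n ∈ ℕ, let c₀, …, c_n : D → ℂ and F : D → ℂ be arbitrary functions, and define φ(a) = exp(∑_{d=1}^∞ a^d / (d(1−q^d)²)) and Φ(a) = φ(a)·F(a) for a ∈ D. If ∑_{i=0}^{n} c_i(a)·F(q^i a) = 0 for all a ∈ D, then for all a ∈ D one has ∑_{i=0}^{n} c_i(a) · ( ∏_{j=1}^{i} (a;q)_{j−1} ) · (a;q)_∞^{−i} · Φ(q^i a) = 0. -/

import Mathlib

/-- The closed-sector topological string partition function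
`φ(a) = exp(∑_{d=1}^∞ a^d / (d(1−q^d)²))`. -/
noncomputable def phiClosed (q a : ℂ) : ℂ :=
  Complex.exp (∑' d : ℕ, a ^ (d + 1) / (((d : ℂ) + 1) * (1 - q ^ (d + 1)) ^ 2))

open Complex Finset

namespace CSR

variable {q : ℂ}

lemma abs_term_lt (hq : ‖q‖ < 1) {b : ℂ} (hb : ‖b‖ < 1) (k : ℕ) :
    ‖b * q ^ k‖ < 1 := by
  rw [norm_mul, norm_pow]
  calc ‖b‖ * ‖q‖ ^ k ≤ ‖b‖ * 1 :=
        mul_le_mul_of_nonneg_left (pow_le_one₀ (norm_nonneg q) hq.le)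
          (norm_nonneg b)
    _ = ‖b‖ := mul_one _
    _ < 1 := hb

lemma factor_ne (hq : ‖q‖ < 1) {b : ℂ} (hb : ‖b‖ < 1) (k : ℕ) :
    (1 : ℂ) - b * q ^ k ≠ 0 := by
  intro h
  have h1 : b * q ^ k = 1 := by linear_combination -h
  have h2 := abs_term_lt hq hb k
  rw [h1] at h2; simp at h2

lemma summable_u (hq : ‖q‖ < 1) {b : ℂ} (hb : ‖b‖ < 1) :
    Summable (fun p : ℕ × ℕ => (b * q ^ p.1) ^ (p.2 + 1) / ((p.2 : ℂ) + 1)) := by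
  have hg : Summable (fun p : ℕ × ℕ =>
      ‖q‖ ^ p.1 * (‖b‖ * ‖b‖ ^ p.2)) :=
    (summable_geometric_of_lt_one (norm_nonneg q) hq).mul_of_nonneg
      ((summable_geometric_of_lt_one (norm_nonneg b) hb).mul_left _)
      (fun k => pow_nonneg (norm_nonneg q) k)
      (fun d => mul_nonneg (norm_nonneg b) (pow_nonneg (norm_nonneg b) d))
  refine Summable.of_norm_bounded hg ?_
  rintro ⟨k, d⟩
  have hd1 : (1 : ℝ) ≤ ‖((d : ℂ) + 1)‖ := by
    rw [show ((d : ℂ) + 1) = ((d + 1 : ℕ) : ℂ) by push_cast; ring,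
      Complex.norm_natCast]
    exact_mod_cast Nat.succ_le_succ (Nat.zero_le d)
  have hnn : (0:ℝ) ≤ ‖b‖ * ‖q‖ ^ k := by positivity
  calc ‖(b * q ^ k) ^ (d + 1) / ((d : ℂ) + 1)‖
      = (‖b‖ * ‖q‖ ^ k) ^ (d + 1) / ‖((d : ℂ) + 1)‖ := by
        rw [norm_div, norm_pow, norm_mul, norm_pow]
    _ ≤ (‖b‖ * ‖q‖ ^ k) ^ (d + 1) := div_le_self (pow_nonneg hnn _) hd1
    _ = ‖b‖ ^ (d + 1) * (‖q‖ ^ k) ^ (d + 1) := mul_pow _ _ _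
    _ ≤ ‖b‖ ^ (d + 1) * (‖q‖ ^ k) ^ 1 := by
        refine mul_le_mul_of_nonneg_left ?_ (pow_nonneg (norm_nonneg b) _)
        exact pow_le_pow_of_le_one (pow_nonneg (norm_nonneg q) k)
            (pow_le_one₀ (norm_nonneg q) hq.le) (Nat.le_add_left 1 d)
    _ = ‖q‖ ^ k * (‖b‖ * ‖b‖ ^ d) := by ring

lemma hasSum_logTaylor {z : ℂ} (hz : ‖z‖ < 1) :
    HasSum (fun d : ℕ => z ^ (d + 1) / ((d : ℂ) + 1)) (-Complex.log (1 - z)) := by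
  have h := Complex.hasSum_taylorSeries_neg_log (z := z) hz
  have h2 := (hasSum_nat_add_iff (f := fun n : ℕ => z ^ n / (n : ℂ)) 1).2 (by simpa using h)
  convert h2 using 2 with d
  · rfl
  push_cast
  ring

lemma one_sub_qpow_ne (hq : ‖q‖ < 1) (d : ℕ) : (1 : ℂ) - q ^ (d + 1) ≠ 0 := by
  have h2 : ‖q ^ (d + 1)‖ < 1 := by
    rw [norm_pow]
    exact pow_lt_one₀ (norm_nonneg q) hq (Nat.succ_ne_zero d)
  intro h
  have h1 : q ^ (d + 1) = 1 := by linear_combination -h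
  rw [h1] at h2; simp at h2

lemma hasSum_geom_fiber (hq : ‖q‖ < 1) {b : ℂ} (d : ℕ) :
    HasSum (fun k : ℕ => (b * q ^ k) ^ (d + 1) / ((d : ℂ) + 1))
      (b ^ (d + 1) / (((d : ℂ) + 1) * (1 - q ^ (d + 1)))) := by
  have hr : ‖q ^ (d + 1)‖ < 1 := by
    rw [norm_pow]
    exact pow_lt_one₀ (norm_nonneg q) hq (Nat.succ_ne_zero d)
  have h := (hasSum_geometric_of_norm_lt_one hr).mul_left (b ^ (d + 1) / ((d : ℂ) + 1))
  have hd : ((d : ℂ) + 1) ≠ 0 := by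
    have h0 : ((d + 1 : ℕ) : ℂ) ≠ 0 := Nat.cast_ne_zero.2 (Nat.succ_ne_zero d)
    push_cast at h0; exact h0
  have hqd := one_sub_qpow_ne hq d
  have hf : (fun k : ℕ => (b * q ^ k) ^ (d + 1) / ((d : ℂ) + 1))
      = fun k : ℕ => b ^ (d + 1) / ((d : ℂ) + 1) * (q ^ (d + 1)) ^ k := by
    funext k
    rw [mul_pow, ← pow_mul, ← pow_mul, Nat.mul_comm k (d + 1)]
    ring
  have hval : b ^ (d + 1) / (((d : ℂ) + 1) * (1 - q ^ (d + 1)))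
      = b ^ (d + 1) / ((d : ℂ) + 1) * (1 - q ^ (d + 1))⁻¹ := by
    field_simp
  rw [hf, hval]
  exact h

lemma hasSum_neg_log (hq : ‖q‖ < 1) {b : ℂ} (hb : ‖b‖ < 1) :
    HasSum (fun k : ℕ => -Complex.log (1 - b * q ^ k))
      (∑' d : ℕ, b ^ (d + 1) / (((d : ℂ) + 1) * (1 - q ^ (d + 1)))) := by
  have hu := summable_u hq hb
  have hfib1 : ∀ k : ℕ, HasSum (fun d : ℕ => (b * q ^ k) ^ (d + 1) / ((d : ℂ) + 1))
      (-Complex.log (1 - b * q ^ k)) := fun k => hasSum_logTaylor (abs_term_lt hq hb k)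
  have hfib2 : ∀ d : ℕ, HasSum (fun k : ℕ => (b * q ^ k) ^ (d + 1) / ((d : ℂ) + 1))
      (b ^ (d + 1) / (((d : ℂ) + 1) * (1 - q ^ (d + 1)))) := fun d => hasSum_geom_fiber hq d
  have h1 : HasSum (fun k : ℕ => -Complex.log (1 - b * q ^ k))
      (∑' p : ℕ × ℕ, (b * q ^ p.1) ^ (p.2 + 1) / ((p.2 : ℂ) + 1)) :=
    hu.hasSum.prod_fiberwise hfib1
  have h2 : HasSum (fun d : ℕ => b ^ (d + 1) / (((d : ℂ) + 1) * (1 - q ^ (d + 1))))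
      (∑' p : ℕ × ℕ, (b * q ^ p.1) ^ (p.2 + 1) / ((p.2 : ℂ) + 1)) :=
    (((Equiv.prodComm ℕ ℕ).hasSum_iff).2 hu.hasSum).prod_fiberwise hfib2
  rw [h2.tsum_eq]; exact h1

lemma summable_log (hq : ‖q‖ < 1) {b : ℂ} (hb : ‖b‖ < 1) :
    Summable (fun k : ℕ => Complex.log (1 - b * q ^ k)) := by
  simpa using (hasSum_neg_log hq hb).summable.neg

lemma exp_tsum_log (hq : ‖q‖ < 1) {b : ℂ} (hb : ‖b‖ < 1) :
    Complex.exp (∑' k : ℕ, Complex.log (1 - b * q ^ k)) = ∏' k : ℕ, (1 - b * q ^ k) := by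
  have h := Complex.cexp_tsum_eq_tprod (f := fun k : ℕ => 1 - b * q ^ k)
    (fun k => factor_ne hq hb k) (summable_log hq hb)
  exact h

lemma tprod_ne (hq : ‖q‖ < 1) {b : ℂ} (hb : ‖b‖ < 1) :
    (∏' k : ℕ, (1 - b * q ^ k)) ≠ 0 := by
  rw [← exp_tsum_log hq hb]; exact Complex.exp_ne_zero _

lemma summable_T1 (hq : ‖q‖ < 1) {b : ℂ} (hb : ‖b‖ < 1) :
    Summable (fun d : ℕ => b ^ (d + 1) / (((d : ℂ) + 1) * (1 - q ^ (d + 1)))) :=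
  ⟨_, ((Equiv.prodComm ℕ ℕ).hasSum_iff).2 (summable_u hq hb).hasSum |>.prod_fiberwise
    (fun d => hasSum_geom_fiber hq d)⟩

lemma one_sub_abs_le (hq : ‖q‖ < 1) (d : ℕ) :
    1 - ‖q‖ ≤ ‖1 - q ^ (d + 1)‖ := by
  calc 1 - ‖q‖ ≤ 1 - ‖q‖ ^ (d + 1) := by
        have h := pow_le_pow_of_le_one (norm_nonneg q) hq.le (Nat.le_add_left 1 d)
        rw [pow_one] at h
        linarith
    _ = ‖(1 : ℂ)‖ - ‖q ^ (d + 1)‖ := by rw [norm_one, norm_pow]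
    _ ≤ ‖1 - q ^ (d + 1)‖ := by
        simpa using norm_sub_norm_le (1 : ℂ) (q ^ (d + 1))

lemma summable_T2 (hq : ‖q‖ < 1) {b : ℂ} (hb : ‖b‖ < 1) :
    Summable (fun d : ℕ => b ^ (d + 1) / (((d : ℂ) + 1) * (1 - q ^ (d + 1)) ^ 2)) := by
  have h0 : (0 : ℝ) < 1 - ‖q‖ := by linarith
  refine Summable.of_norm_bounded
    (g := fun d : ℕ => (1 - ‖q‖)⁻¹ ^ 2 * (‖b‖ * ‖b‖ ^ d)) ?_ ?_
  · exact ((summable_geometric_of_lt_one (norm_nonneg b) hb).mul_left _).mul_left _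
  · intro d
    have hd1 : (1 : ℝ) ≤ ‖((d : ℂ) + 1)‖ := by
      rw [show ((d : ℂ) + 1) = ((d + 1 : ℕ) : ℂ) by push_cast; ring,
        Complex.norm_natCast]
      exact_mod_cast Nat.succ_le_succ (Nat.zero_le d)
    have hle := one_sub_abs_le hq d
    rw [norm_div, norm_mul, norm_pow, norm_pow]
    calc ‖b‖ ^ (d + 1) / (‖((d : ℂ) + 1)‖ * ‖1 - q ^ (d + 1)‖ ^ 2)
        ≤ ‖b‖ ^ (d + 1) / (1 * (1 - ‖q‖) ^ 2) := by
          refine div_le_div₀ (pow_nonneg (norm_nonneg b) _) le_rfl ?_ ?_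
          · rw [one_mul]; exact pow_pos h0 2
          · exact mul_le_mul hd1 (pow_le_pow_left₀ h0.le hle 2)
              (pow_nonneg h0.le 2) (le_trans zero_le_one hd1)
      _ = (1 - ‖q‖)⁻¹ ^ 2 * (‖b‖ * ‖b‖ ^ d) := by
          rw [one_mul]
          field_simp
          ring

lemma phi_step (hq : ‖q‖ < 1) {b : ℂ} (hb : ‖b‖ < 1) :
    phiClosed q (q * b) = (∏' k : ℕ, (1 - b * q ^ k)) * phiClosed q b := by
  have hs2 := summable_T2 hq hb
  have hs1 := summable_T1 hq hb
  have key : ∀ d : ℕ, (q * b) ^ (d + 1) / (((d : ℂ) + 1) * (1 - q ^ (d + 1)) ^ 2)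
      = b ^ (d + 1) / (((d : ℂ) + 1) * (1 - q ^ (d + 1)) ^ 2)
        - b ^ (d + 1) / (((d : ℂ) + 1) * (1 - q ^ (d + 1))) := by
    intro d
    have h1 := one_sub_qpow_ne hq d
    have h2 : ((d : ℂ) + 1) ≠ 0 := by
      have h0 : ((d + 1 : ℕ) : ℂ) ≠ 0 := Nat.cast_ne_zero.2 (Nat.succ_ne_zero d)
      push_cast at h0; exact h0
    field_simp
    ring
  have hsum : (∑' d : ℕ, (q * b) ^ (d + 1) / (((d : ℂ) + 1) * (1 - q ^ (d + 1)) ^ 2))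
      = (∑' d : ℕ, b ^ (d + 1) / (((d : ℂ) + 1) * (1 - q ^ (d + 1)) ^ 2))
        - (∑' d : ℕ, b ^ (d + 1) / (((d : ℂ) + 1) * (1 - q ^ (d + 1)))) := by
    rw [← Summable.tsum_sub hs2 hs1]
    exact tsum_congr key
  have hT1 : (∑' d : ℕ, b ^ (d + 1) / (((d : ℂ) + 1) * (1 - q ^ (d + 1))))
      = -∑' k : ℕ, Complex.log (1 - b * q ^ k) := by
    rw [← (hasSum_neg_log hq hb).tsum_eq, tsum_neg]
  unfold phiClosed
  rw [hsum, hT1, sub_neg_eq_add, Complex.exp_add, exp_tsum_log hq hb, mul_comm]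

lemma abs_shift_lt (hq : ‖q‖ < 1) {a : ℂ} (ha : ‖a‖ < 1) (i : ℕ) :
    ‖q ^ i * a‖ < 1 := by
  rw [mul_comm]; exact abs_term_lt hq ha i

lemma tprod_shift (hq : ‖q‖ < 1) {a : ℂ} (ha : ‖a‖ < 1) (i : ℕ) :
    (∏ k ∈ Finset.range i, (1 - a * q ^ k)) * (∏' k : ℕ, (1 - (q ^ i * a) * q ^ k))
      = ∏' k : ℕ, (1 - a * q ^ k) := by
  have hqa := abs_shift_lt hq ha i
  have hcong : ∀ k : ℕ, (1 : ℂ) - (q ^ i * a) * q ^ k = 1 - a * q ^ (k + i) := by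
    intro k; rw [pow_add]; ring
  have hsplit := Summable.sum_add_tsum_nat_add i (summable_log hq ha)
  have hfin : Complex.exp (∑ k ∈ Finset.range i, Complex.log (1 - a * q ^ k))
      = ∏ k ∈ Finset.range i, (1 - a * q ^ k) := by
    rw [Complex.exp_sum]
    exact Finset.prod_congr rfl (fun k _ => Complex.exp_log (factor_ne hq ha k))
  have h1 : (∏' k : ℕ, (1 - (q ^ i * a) * q ^ k))
      = Complex.exp (∑' k : ℕ, Complex.log (1 - a * q ^ (k + i))) := by
    rw [← exp_tsum_log hq hqa]
    congr 1
    exact tsum_congr (fun k => by rw [hcong k])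
  rw [h1, ← hfin, ← Complex.exp_add, hsplit, exp_tsum_log hq ha]

lemma key_identity (hq : ‖q‖ < 1) {a : ℂ} (ha : ‖a‖ < 1) (i : ℕ) :
    (∏ j ∈ Finset.range i, ∏ k ∈ Finset.range j, (1 - a * q ^ k)) *
      ((∏' k : ℕ, (1 - a * q ^ k))⁻¹) ^ i * phiClosed q (q ^ i * a) = phiClosed q a := by
  induction i with
  | zero => simp
  | succ i ih =>
    have hqa := abs_shift_lt hq ha i
    have hstep : phiClosed q (q ^ (i + 1) * a)
        = (∏' k : ℕ, (1 - (q ^ i * a) * q ^ k)) * phiClosed q (q ^ i * a) := by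
      rw [show q ^ (i + 1) * a = q * (q ^ i * a) by ring]
      exact phi_step hq hqa
    have hPa : (∏' k : ℕ, (1 - a * q ^ k)) ≠ 0 := tprod_ne hq ha
    have hQ : (∏ k ∈ Finset.range i, (1 - a * q ^ k)) ≠ 0 :=
      Finset.prod_ne_zero_iff.2 (fun k _ => factor_ne hq ha k)
    have hshift := tprod_shift hq ha i
    have hPi : (∏' k : ℕ, (1 - (q ^ i * a) * q ^ k))
        = (∏ k ∈ Finset.range i, (1 - a * q ^ k))⁻¹ * ∏' k : ℕ, (1 - a * q ^ k) := by
      rw [← hshift, ← mul_assoc, inv_mul_cancel₀ hQ, one_mul]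
    rw [Finset.prod_range_succ, hstep, hPi, pow_succ, ← ih]
    field_simp

end CSR

/-- If `∑_{i=0}^n c_i(a) F(q^i a) = 0` on the unit disk, then `Φ = φ·F` satisfies
`∑_{i=0}^n c_i(a) (∏_{j=1}^{i} (a;q)_{j−1}) (a;q)_∞^{−i} Φ(q^i a) = 0` on the unit disk. -/
theorem closed_sector_recursion
    (q : ℂ) (hq : ‖q‖ < 1) (n : ℕ)
    (c : ℕ → ℂ → ℂ) (F : ℂ → ℂ)
    (hrec : ∀ a : ℂ, ‖a‖ < 1 →
      ∑ i ∈ Finset.range (n + 1), c i a * F (q ^ i * a) = 0) :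
    ∀ a : ℂ, ‖a‖ < 1 →
      ∑ i ∈ Finset.range (n + 1),
        c i a * (∏ j ∈ Finset.range i, ∏ k ∈ Finset.range j, (1 - a * q ^ k)) *
          ((∏' k : ℕ, (1 - a * q ^ k))⁻¹) ^ i *
          (phiClosed q (q ^ i * a) * F (q ^ i * a)) = 0 := by
  intro a ha
  have h := hrec a ha
  calc ∑ i ∈ Finset.range (n + 1),
        c i a * (∏ j ∈ Finset.range i, ∏ k ∈ Finset.range j, (1 - a * q ^ k)) *
          ((∏' k : ℕ, (1 - a * q ^ k))⁻¹) ^ i *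
          (phiClosed q (q ^ i * a) * F (q ^ i * a))
      = ∑ i ∈ Finset.range (n + 1), phiClosed q a * (c i a * F (q ^ i * a)) := by
        refine Finset.sum_congr rfl (fun i _ => ?_)
        rw [← CSR.key_identity hq ha i]
        ring
    _ = phiClosed q a * ∑ i ∈ Finset.range (n + 1), c i a * F (q ^ i * a) := by
        rw [Finset.mul_sum]
    _ = 0 := by rw [h, mul_zero]
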